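/- Let n ≥ 2, d ≥ 1, and let ρ : {0,1}^n → M_d(ℂ) be a family of matrices that is even-parity-oblivious, i.e., for every subset S ⊆ {1,…,n} of even size |S| ≥ 2, Σ_{x : x_S = 0} ρ_x = Σ_{x : x_S = 1} ρ_x. Then the function s ↦ ρ_s + ρ_{s̄}, where s̄ denotes the bitwise complement of s, is constant on {0,1}^n. -/

import Mathlib

open Matrix BigOperators Finset

noncomputable def e2 : ZMod 2 → ℂ := fun a => if a = 0 then 1 else -1

lemma e2_zero : e2 0 = 1 := rfl

lemma e2_add (a b : ZMod 2) : e2 (a + b) = e2 a * e2 b := by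
  obtain rfl | rfl : a = 0 ∨ a = 1 := by revert a; decide
  all_goals obtain rfl | rfl : b = 0 ∨ b = 1 := by revert b; decide
  all_goals simp [e2, show (1:ZMod 2) + 1 = 0 from rfl, show ¬ ((1:ZMod 2) = 0) from by decide]

lemma e2_sum {ι : Type*} (S : Finset ι) (f : ι → ZMod 2) :
    e2 (∑ i ∈ S, f i) = ∏ i ∈ S, e2 (f i) := by
  classical
  induction S using Finset.induction_on with
  | empty => simp [e2_zero]
  | insert _ _ h ih => simp [Finset.sum_insert h, Finset.prod_insert h, e2_add, ih]

lemma orth (n : ℕ) (x : Fin n → ZMod 2) :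
    ∑ S : Finset (Fin n), ∏ i ∈ S, e2 (x i) = if x = 0 then (2:ℂ)^n else 0 := by
  classical
  have h := Finset.prod_add (fun i => e2 (x i)) (fun _ => (1:ℂ)) (univ : Finset (Fin n))
  simp only [Finset.prod_const_one, mul_one, Finset.powerset_univ] at h
  rw [← h]
  by_cases hx : x = 0
  · subst hx
    simp only [Pi.zero_apply, e2_zero, if_true]
    rw [Finset.prod_const]
    norm_num
  · obtain ⟨j, hj⟩ : ∃ j, x j ≠ 0 := by
      by_contra hc; push_neg at hc; exact hx (funext fun i => hc i)
    rw [Finset.prod_eq_zero (Finset.mem_univ j)]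
    · simp [hx]
    · simp [e2, hj]

/-- If a family of matrices `ρ_x` is even-parity-oblivious, then the
symmetrization `s ↦ ρ_s + ρ_{s̄}` (with `s̄` the bitwise complement) is constant. -/
theorem even_parity_oblivious_symmetrization_constant
    (n d : ℕ) (hn : 2 ≤ n) (hd : 1 ≤ d)
    (ρ : (Fin n → ZMod 2) → Matrix (Fin d) (Fin d) ℂ)
    (hepo : ∀ S : Finset (Fin n), 2 ≤ S.card → Even S.card →
      ∑ x ∈ Finset.univ.filter (fun x : Fin n → ZMod 2 => ∑ i ∈ S, x i = 0), ρ x =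
      ∑ x ∈ Finset.univ.filter (fun x : Fin n → ZMod 2 => ∑ i ∈ S, x i = 1), ρ x) :
    ∀ s s' : Fin n → ZMod 2,
      ρ s + ρ (fun i => s i + 1) = ρ s' + ρ (fun i => s' i + 1) := by
  classical
  set F : Finset (Fin n) → Matrix (Fin d) (Fin d) ℂ :=
    fun S => ∑ x : Fin n → ZMod 2, e2 (∑ i ∈ S, x i) • ρ x with hF
  -- nontrivial even Fourier coefficients vanish
  have hFzero : ∀ S : Finset (Fin n), 2 ≤ S.card → Even S.card → F S = 0 := by
    intro S h2 he
    have key := hepo S h2 he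
    rw [hF]
    show (∑ x : Fin n → ZMod 2, e2 (∑ i ∈ S, x i) • ρ x) = 0
    rw [← Finset.sum_filter_add_sum_filter_not univ
      (fun x : Fin n → ZMod 2 => (∑ i ∈ S, x i) = 0)]
    have h1 : ∑ x ∈ univ.filter (fun x : Fin n → ZMod 2 => (∑ i ∈ S, x i) = 0),
        e2 (∑ i ∈ S, x i) • ρ x
        = ∑ x ∈ univ.filter (fun x : Fin n → ZMod 2 => (∑ i ∈ S, x i) = 0), ρ x := by
      refine Finset.sum_congr rfl fun x hx => ?_
      rw [Finset.mem_filter] at hx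
      rw [hx.2]; simp [e2_zero]
    have hne : ∀ a : ZMod 2, ¬ a = 0 ↔ a = 1 := by decide
    have hnot : univ.filter (fun x : Fin n → ZMod 2 => ¬ (∑ i ∈ S, x i) = 0)
        = univ.filter (fun x : Fin n → ZMod 2 => (∑ i ∈ S, x i) = 1) := by
      apply Finset.filter_congr; intro x _; exact hne _
    have h2' : ∑ x ∈ univ.filter (fun x : Fin n → ZMod 2 => ¬ (∑ i ∈ S, x i) = 0),
        e2 (∑ i ∈ S, x i) • ρ x
        = -∑ x ∈ univ.filter (fun x : Fin n → ZMod 2 => (∑ i ∈ S, x i) = 1), ρ x := by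
      rw [hnot, ← Finset.sum_neg_distrib]
      refine Finset.sum_congr rfl fun x hx => ?_
      rw [Finset.mem_filter] at hx
      rw [hx.2]
      simp [e2]
    rw [h1, h2', key]
    simp
  -- Fourier inversion
  have hG : ∀ y : Fin n → ZMod 2,
      (∑ S : Finset (Fin n), e2 (∑ i ∈ S, y i) • F S) = (2:ℂ)^n • ρ y := by
    intro y
    rw [hF]
    simp only [Finset.smul_sum, smul_smul]
    rw [Finset.sum_comm]
    have key : ∀ x : Fin n → ZMod 2,
        ∑ S : Finset (Fin n), (e2 (∑ i ∈ S, y i) * e2 (∑ i ∈ S, x i)) • ρ x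
        = (if (fun i => y i + x i) = 0 then (2:ℂ)^n else 0) • ρ x := by
      intro x
      rw [← Finset.sum_smul]
      congr 1
      have h2 : ∀ S : Finset (Fin n), e2 (∑ i ∈ S, y i) * e2 (∑ i ∈ S, x i)
          = ∏ i ∈ S, e2 (y i + x i) := by
        intro S
        rw [← e2_add, ← Finset.sum_add_distrib, e2_sum]
      simp_rw [h2]
      exact orth n (fun i => y i + x i)
    rw [Finset.sum_congr rfl fun x _ => key x]
    rw [Finset.sum_eq_single y]
    · have hyy : (fun i => y i + y i) = (0 : Fin n → ZMod 2) := by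
        funext i
        have : ∀ a : ZMod 2, a + a = 0 := by decide
        exact this _
      rw [if_pos hyy]
    · intro x _ hxy
      have hne : (fun i => y i + x i) ≠ 0 := by
        intro hc
        apply hxy
        funext i
        have h := congrFun hc i
        revert h
        have : ∀ a b : ZMod 2, a + b = 0 → b = a := by decide
        exact this (y i) (x i)
      simp [hne]
    · simp
  -- the symmetrization only sees the empty Fourier coefficient
  have hsym : ∀ s : Fin n → ZMod 2,
      (2:ℂ)^n • (ρ s + ρ (fun i => s i + 1)) = (2:ℂ) • F ∅ := by
    intro s
    rw [smul_add, ← hG s, ← hG (fun i => s i + 1), ← Finset.sum_add_distrib]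
    rw [Finset.sum_eq_single ∅]
    · simp only [Finset.sum_empty, e2_zero, one_smul]
      rw [two_smul]
    · intro S _ hS
      have hcard : 1 ≤ S.card :=
        Finset.card_pos.mpr (Finset.nonempty_of_ne_empty hS)
      have hcompl : e2 (∑ i ∈ S, (s i + 1)) = e2 (∑ i ∈ S, s i) * e2 ((S.card : ZMod 2)) := by
        rw [← e2_add]
        congr 1
        rw [Finset.sum_add_distrib]
        congr 1
        rw [Finset.sum_const]
        simp
      by_cases hev : Even S.card
      · have h2 : 2 ≤ S.card := by
          obtain ⟨k, hk⟩ := hev; omega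
        rw [hFzero S h2 hev]
        simp
      · have hodd : (S.card : ZMod 2) = 1 := by
          have h := Nat.not_even_iff_odd.mp hev
          rw [Nat.odd_iff] at h
          conv_lhs => rw [← Nat.mod_add_div S.card 2, h]
          push_cast
          simp [show (2 : ZMod 2) = 0 from rfl]
        rw [hcompl, hodd]
        have he1 : e2 1 = -1 := rfl
        rw [he1, mul_neg_one, neg_smul]
        simp
    · simp
  intro s s'
  have h := (hsym s).trans (hsym s').symm
  have h2n : (2:ℂ)^n ≠ 0 := pow_ne_zero n two_ne_zero
  exact smul_right_injective _ h2n h
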